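/- Define z(β) = e·β + log β and 𝒱(β) = β·exp(−z(β))·(exp(z(β)) − z(β) − 1) for β > 0. Then 𝒱(e^{−1}) = 0, the first derivative of 𝒱 at β = e^{−1} is 0, the second derivative of 𝒱 at β = e^{−1} equals 4e, and the third derivative of 𝒱 at β = e^{−1} equals −10e². -/

import Mathlib

open Real Filter Set Topology

noncomputable def KSg0 (β : ℝ) : ℝ :=
  β - (Real.exp 1 * β + Real.log β + 1) * Real.exp (-(Real.exp 1 * β))

noncomputable def KSA (β : ℝ) : ℝ := 1/β - Real.exp 1^2 * β - Real.exp 1 * Real.log β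
noncomputable def KSA' (β : ℝ) : ℝ := -(1/β^2) - Real.exp 1^2 - Real.exp 1/β
noncomputable def KSA'' (β : ℝ) : ℝ := 2/β^3 + Real.exp 1/β^2

noncomputable def KSg1 (β : ℝ) : ℝ := 1 - KSA β * Real.exp (-(Real.exp 1 * β))
noncomputable def KSg2 (β : ℝ) : ℝ :=
  Real.exp (-(Real.exp 1 * β)) * (Real.exp 1 * KSA β - KSA' β)
noncomputable def KSg3 (β : ℝ) : ℝ :=
  Real.exp (-(Real.exp 1 * β)) *
    (-(Real.exp 1^2) * KSA β + 2 * Real.exp 1 * KSA' β - KSA'' β)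

lemma KSexp2 : Real.exp 2 = Real.exp 1 ^ 2 := by
  rw [show (2:ℝ) = 1 + 1 by norm_num, Real.exp_add]; ring

lemma KSexp3 : Real.exp 3 = Real.exp 1 ^ 3 := by
  rw [show (3:ℝ) = 1 + 1 + 1 by norm_num, Real.exp_add, Real.exp_add]; ring

lemma KShE (x : ℝ) : HasDerivAt (fun β : ℝ => Real.exp (-(Real.exp 1 * β)))
    (Real.exp (-(Real.exp 1 * x)) * (-(Real.exp 1))) x := by
  have := (((hasDerivAt_id x).const_mul (Real.exp 1)).neg).exp
  simpa using this

lemma KShdA (x : ℝ) (hx : 0 < x) : HasDerivAt KSA (KSA' x) x := by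
  have h := ((hasDerivAt_inv hx.ne').sub
      ((hasDerivAt_id x).const_mul (Real.exp 1 ^ 2))).sub
      ((Real.hasDerivAt_log hx.ne').const_mul (Real.exp 1))
  convert h using 1
  all_goals try rfl
  · funext β; unfold KSA; simp only [id_eq, one_div, Pi.sub_apply]; try ring
  · unfold KSA'; try field_simp; try ring

lemma KShdA' (x : ℝ) (hx : 0 < x) : HasDerivAt KSA' (KSA'' x) x := by
  have h := (((hasDerivAt_inv hx.ne').mul (hasDerivAt_inv hx.ne')).neg.sub
      (hasDerivAt_const x (Real.exp 1 ^ 2))).sub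
      ((hasDerivAt_inv hx.ne').const_mul (Real.exp 1))
  convert h using 1
  all_goals try rfl
  · funext β; unfold KSA'; simp only [Pi.sub_apply, Pi.neg_apply, Pi.pow_apply, Pi.mul_apply]; field_simp
  · unfold KSA''; field_simp; ring

lemma KShd0 (x : ℝ) (hx : 0 < x) : HasDerivAt KSg0 (KSg1 x) x := by
  have h1 : HasDerivAt (fun β : ℝ => Real.exp 1 * β + Real.log β + 1)
      (Real.exp 1 * 1 + x⁻¹) x :=
    (((hasDerivAt_id x).const_mul (Real.exp 1)).add (Real.hasDerivAt_log hx.ne')).add_const 1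
  have h2 := (hasDerivAt_id x).sub (h1.mul (KShE x))
  convert h2 using 1
  all_goals try rfl
  unfold KSg1 KSA
  field_simp
  ring

lemma KShd1 (x : ℝ) (hx : 0 < x) : HasDerivAt KSg1 (KSg2 x) x := by
  have h2 := (((KShdA x hx).mul (KShE x)).const_sub 1)
  convert h2 using 1
  all_goals try rfl
  unfold KSg2
  ring

lemma KShd2 (x : ℝ) (hx : 0 < x) : HasDerivAt KSg2 (KSg3 x) x := by
  have hA : HasDerivAt (fun β => Real.exp 1 * KSA β - KSA' β)
      (Real.exp 1 * KSA' x - KSA'' x) x :=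
    ((KShdA x hx).const_mul (Real.exp 1)).sub (KShdA' x hx)
  have h2 := (KShE x).mul hA
  convert h2 using 1
  all_goals try rfl
  unfold KSg3
  ring

theorem karpSipser_fluid_vertices_derivatives (z 𝒱 : ℝ → ℝ)
    (hz : ∀ β : ℝ, z β = Real.exp 1 * β + Real.log β)
    (hV : ∀ β : ℝ, 𝒱 β = β * Real.exp (-(z β)) * (Real.exp (z β) - z β - 1)) :
    𝒱 (Real.exp 1)⁻¹ = 0 ∧
    deriv 𝒱 (Real.exp 1)⁻¹ = 0 ∧
    iteratedDeriv 2 𝒱 (Real.exp 1)⁻¹ = 4 * Real.exp 1 ∧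
    iteratedDeriv 3 𝒱 (Real.exp 1)⁻¹ = -(10 * (Real.exp 1) ^ 2) := by
  set x0 : ℝ := (Real.exp 1)⁻¹ with hx0
  have hx0pos : 0 < x0 := inv_pos.mpr (Real.exp_pos 1)
  have hpos : ∀ᶠ β in 𝓝 x0, (0:ℝ) < β := eventually_gt_nhds hx0pos
  have hVg : 𝒱 =ᶠ[𝓝 x0] KSg0 := by
    filter_upwards [hpos] with β hβ
    have h1 : Real.exp (-(Real.exp 1 * β)) * Real.exp (Real.exp 1 * β) = 1 := by
      rw [← Real.exp_add]; simp
    rw [hV, hz]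
    unfold KSg0
    rw [neg_add, Real.exp_add, Real.exp_add, Real.exp_neg (Real.log β), Real.exp_log hβ]
    field_simp
    rw [mul_comm (Real.exp 1) β] at h1
    linear_combination (β : ℝ) * h1
  have E1 : deriv 𝒱 =ᶠ[𝓝 x0] KSg1 := by
    refine hVg.deriv.trans ?_
    filter_upwards [hpos] with β hβ
    exact (KShd0 β hβ).deriv
  have E2 : deriv (deriv 𝒱) =ᶠ[𝓝 x0] KSg2 := by
    refine E1.deriv.trans ?_
    filter_upwards [hpos] with β hβ
    exact (KShd1 β hβ).deriv
  have E3 : deriv (deriv (deriv 𝒱)) =ᶠ[𝓝 x0] KSg3 := by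
    refine E2.deriv.trans ?_
    filter_upwards [hpos] with β hβ
    exact (KShd2 β hβ).deriv
  have hlog : Real.log x0 = -1 := by rw [hx0, Real.log_inv, Real.log_exp]
  have hmul : Real.exp 1 * x0 = 1 := mul_inv_cancel₀ (Real.exp_ne_zero 1)
  have hinv : (1:ℝ)/x0 = Real.exp 1 := by rw [hx0, one_div, inv_inv]
  have hE : Real.exp (-(Real.exp 1 * x0)) = (Real.exp 1)⁻¹ := by
    rw [hmul, Real.exp_neg]
  have hA : KSA x0 = Real.exp 1 := by
    unfold KSA; rw [hinv, hlog, hx0]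
    field_simp
    norm_num
  have hA' : KSA' x0 = -3 * Real.exp 1 ^ 2 := by
    unfold KSA'; rw [hx0]
    field_simp
    norm_num
  have hA'' : KSA'' x0 = 3 * Real.exp 1 ^ 3 := by
    unfold KSA''; rw [hx0]
    field_simp
    norm_num
  refine ⟨?_, ?_, ?_, ?_⟩
  · rw [hV, hz, hx0]
    have : Real.exp 1 * (Real.exp 1)⁻¹ + Real.log (Real.exp 1)⁻¹ = 0 := by
      rw [Real.log_inv, Real.log_exp, mul_inv_cancel₀ (Real.exp_ne_zero 1)]; ring
    rw [this]; simp
  · rw [E1.eq_of_nhds]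
    unfold KSg1
    rw [hA, hE]
    field_simp
    norm_num
  · rw [iteratedDeriv_succ, iteratedDeriv_one, E2.eq_of_nhds]
    unfold KSg2
    rw [hA, hA', hE]
    field_simp
    norm_num
  · rw [iteratedDeriv_succ, iteratedDeriv_succ, iteratedDeriv_one, E3.eq_of_nhds]
    unfold KSg3
    rw [hA, hA', hA'', hE]
    field_simp
    norm_num
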